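/- arXiv:2204.04594 — 2 statements merged into one kernel-verified Lean document; each statement's English description precedes it below -/
import Mathlib

section
/- Let Λ be a countable discrete group and let G be a Polish group containing an element h₀ such that the identity 1_G does not lie in the closure of the conjugacy class {g·h₀·g⁻¹ : g ∈ G}. Then E(G × Λ) is Borel bireducible with E(G), where G × Λ carries the product group structure and product topology. -/
open Filter Topology

/-- `E(G)`: the equivalence relation on `G^ω = ℕ → G` relating `x` and `y` iff
the sequence `n ↦ x n * (y n)⁻¹` converges in `G`. -/
def ERel (G : Type*) [Group G] [TopologicalSpace G] (x y : ℕ → G) : Prop :=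
  ∃ g : G, Tendsto (fun n => x n * (y n)⁻¹) atTop (𝓝 g)

/-- Borel reducibility of binary relations on topological spaces, with respect to
the Borel σ-algebras of the topologies. -/
def BorelReducible {X Y : Type*} [TopologicalSpace X] [TopologicalSpace Y]
    (E : X → X → Prop) (F : Y → Y → Prop) : Prop :=
  ∃ θ : X → Y, @Measurable X Y (borel X) (borel Y) θ ∧ ∀ x y, (E x y ↔ F (θ x) (θ y))

set_option linter.unusedSectionVars false

section Aux

lemma myBorelMeasurable {X Y : Type*} [TopologicalSpace X] [TopologicalSpace Y]
    {f : X → Y} (hf : Continuous f) : @Measurable X Y (borel X) (borel Y) f := by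
  letI : MeasurableSpace X := borel X
  letI : MeasurableSpace Y := borel Y
  haveI : BorelSpace X := ⟨rfl⟩
  haveI : BorelSpace Y := ⟨rfl⟩
  exact hf.measurable

variable {G Λ : Type*} [Group G] [TopologicalSpace G] [IsTopologicalGroup G]
  [Group Λ] [TopologicalSpace Λ] [IsTopologicalGroup Λ] [DiscreteTopology Λ]

lemma quot_cancel (A B h : G) : (A * h) * (B * h)⁻¹ = A * B⁻¹ := by group

/-- the increment sequence of the `Λ`-component -/
def incr (x : ℕ → G × Λ) (n : ℕ) : Λ := ((x n).2)⁻¹ * (x (n + 1)).2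

/-- the reduction map -/
noncomputable def theta (h₀ : G) (ι : Λ → ℕ) (e : ℕ ≃ ℕ × ℕ) (x : ℕ → G × Λ) (j : ℕ) : G :=
  (x (max (e j).1 (e j).2)).1 * h₀ ^ (if ι (incr x (e j).1) = (e j).2 then 1 else 0)

/-- the quotient of two theta-sequences, indexed by pairs -/
noncomputable def Qf (h₀ : G) (ι : Λ → ℕ) (x y : ℕ → G × Λ) (p : ℕ × ℕ) : G :=
  ((x (max p.1 p.2)).1 * h₀ ^ (if ι (incr x p.1) = p.2 then 1 else 0)) *
    ((y (max p.1 p.2)).1 * h₀ ^ (if ι (incr y p.1) = p.2 then 1 else 0))⁻¹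

lemma theta_continuous (h₀ : G) (ι : Λ → ℕ) (e : ℕ ≃ ℕ × ℕ) :
    Continuous (theta (Λ := Λ) h₀ ι e) := by
  refine continuous_pi fun j => ?_
  refine Continuous.mul ?_ ?_
  · exact (continuous_apply (max (e j).1 (e j).2)).fst
  · have h1 : Continuous fun x : ℕ → G × Λ => incr x (e j).1 :=
      (((continuous_apply (e j).1).snd).inv).mul ((continuous_apply ((e j).1 + 1)).snd)
    exact (continuous_of_discreteTopology
      (f := fun μ : Λ => h₀ ^ (if ι μ = (e j).2 then 1 else 0))).comp h1

lemma tendsto_Qf_cofinite (h₀ : G) (ι : Λ → ℕ) (x y : ℕ → G × Λ) (g : G)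
    (hc : Tendsto (fun n => (x n).1 * ((y n).1)⁻¹) atTop (𝓝 g))
    (N : ℕ) (hN : ∀ n, N ≤ n → incr x n = incr y n) :
    Tendsto (Qf h₀ ι x y) cofinite (𝓝 g) := by
  rw [tendsto_def]
  intro U hU
  rw [Filter.mem_cofinite]
  obtain ⟨M, hM⟩ := eventually_atTop.1 (hc.eventually_mem hU)
  have hfin : (({m | m < M} ×ˢ {m | m < M}) ∪
      ((fun n => (n, ι (incr x n))) '' {m | m < N}) ∪
      ((fun n => (n, ι (incr y n))) '' {m | m < N})).Finite :=
    (((Set.finite_lt_nat M).prod (Set.finite_lt_nat M)).union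
      ((Set.finite_lt_nat N).image _)).union ((Set.finite_lt_nat N).image _)
  refine hfin.subset ?_
  intro p hp
  simp only [Set.mem_compl_iff, Set.mem_preimage] at hp
  have heq : ∀ (h1 : (if ι (incr x p.1) = p.2 then 1 else 0 : ℕ)
      = (if ι (incr y p.1) = p.2 then 1 else 0 : ℕ)), p ∈ {m | m < M} ×ˢ {m | m < M} := by
    intro h1
    have hQ : Qf h₀ ι x y p = (x (max p.1 p.2)).1 * ((y (max p.1 p.2)).1)⁻¹ := by
      rw [Qf, h1, quot_cancel]
    have hlt : ¬ M ≤ max p.1 p.2 := fun hle => hp (hQ ▸ hM _ hle)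
    push_neg at hlt
    exact ⟨lt_of_le_of_lt (le_max_left _ _) hlt, lt_of_le_of_lt (le_max_right _ _) hlt⟩
  by_cases h1 : ι (incr x p.1) = p.2 <;> by_cases h2 : ι (incr y p.1) = p.2
  · exact Or.inl (Or.inl (heq (by rw [if_pos h1, if_pos h2])))
  · -- x-tag only: p.1 < N
    have hpN : p.1 < N := by
      by_contra hge
      push_neg at hge
      exact h2 ((hN p.1 hge) ▸ h1)
    exact Or.inl (Or.inr ⟨p.1, hpN, by simp [h1]⟩)
  · have hpN : p.1 < N := by
      by_contra hge
      push_neg at hge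
      exact h1 ((hN p.1 hge).symm ▸ h2)
    exact Or.inr ⟨p.1, hpN, by simp [h2]⟩
  · exact Or.inl (Or.inl (heq (by rw [if_neg h1, if_neg h2])))

lemma tendsto_c_of_Qf (h₀ : G) (ι : Λ → ℕ) (x y : ℕ → G × Λ) (g : G)
    (hq : Tendsto (Qf h₀ ι x y) cofinite (𝓝 g)) :
    Tendsto (fun n => (x n).1 * ((y n).1)⁻¹) atTop (𝓝 g) := by
  have hinj : Function.Injective fun k : ℕ => ((0 : ℕ), k) := fun a b h => by
    simpa using h
  have h1 : Tendsto (fun k : ℕ => Qf h₀ ι x y (0, k)) cofinite (𝓝 g) :=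
    hq.comp hinj.tendsto_cofinite
  rw [← Nat.cofinite_eq_atTop]
  refine Tendsto.congr' ?_ h1
  have h2 : ∀ᶠ k in cofinite, k ∉ ({ι (incr x 0), ι (incr y 0)} : Set ℕ) :=
    ((Set.finite_singleton _).insert _).eventually_cofinite_notMem
  filter_upwards [h2] with k hk
  simp only [Set.mem_insert_iff, Set.mem_singleton_iff, not_or] at hk
  have e1 : ¬ ι (incr x 0) = k := fun h => hk.1 h.symm
  have e2 : ¬ ι (incr y 0) = k := fun h => hk.2 h.symm
  simp [Qf, e1, e2]

lemma incr_ev_eq (h₀ : G) (ι : Λ → ℕ) (hι : Function.Injective ι) (x y : ℕ → G × Λ) (g : G)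
    (hh₀ : (1 : G) ∉ closure {z : G | ∃ g : G, z = g * h₀ * g⁻¹})
    (hq : Tendsto (Qf h₀ ι x y) cofinite (𝓝 g))
    (hc : Tendsto (fun n => (x n).1 * ((y n).1)⁻¹) atTop (𝓝 g)) :
    ∀ᶠ n in atTop, incr x n = incr y n := by
  by_contra hcon
  rw [← Nat.cofinite_eq_atTop, Filter.not_eventually] at hcon
  have hBinf : {n : ℕ | ¬ incr x n = incr y n}.Infinite :=
    Filter.frequently_cofinite_iff_infinite.1 hcon
  set B := {n : ℕ | ¬ incr x n = incr y n} with hB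
  set L := cofinite ⊓ 𝓟 B with hLdef
  have hL : L.NeBot := by
    rw [hLdef, Filter.inf_principal_neBot_iff]
    intro U hU
    obtain ⟨n, hn⟩ := (hBinf.diff (Filter.mem_cofinite.1 hU)).nonempty
    exact ⟨n, not_not.1 hn.2, hn.1⟩
  have hm : Tendsto (fun n => max n (ι (incr x n))) L atTop :=
    tendsto_atTop_mono (fun n => le_max_left _ _)
      (tendsto_id.mono_left (inf_le_left.trans (le_of_eq Nat.cofinite_eq_atTop)))
  have hpinj : Function.Injective fun n : ℕ => (n, ι (incr x n)) :=
    fun a b h => congrArg Prod.fst h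
  have hp : Tendsto (fun n : ℕ => (n, ι (incr x n))) L cofinite :=
    hpinj.tendsto_cofinite.mono_left inf_le_left
  have hcm : Tendsto (fun n => (x (max n (ι (incr x n)))).1 *
      ((y (max n (ι (incr x n)))).1)⁻¹) L (𝓝 g) := hc.comp hm
  have hQp : Tendsto (fun n => Qf h₀ ι x y (n, ι (incr x n))) L (𝓝 g) := hq.comp hp
  have hF : Tendsto (fun n => ((x (max n (ι (incr x n)))).1 *
      ((y (max n (ι (incr x n)))).1)⁻¹)⁻¹ * Qf h₀ ι x y (n, ι (incr x n))) L (𝓝 (g⁻¹ * g)) :=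
    hcm.inv.mul hQp
  rw [inv_mul_cancel] at hF
  refine hh₀ (mem_closure_of_tendsto hF ?_)
  have hBev : ∀ᶠ n in L, n ∈ B :=
    (eventually_principal.2 fun a h => h).filter_mono inf_le_right
  filter_upwards [hBev] with n hn
  have e2 : ¬ ι (incr y n) = ι (incr x n) := fun h => hn (hι h).symm
  have hval : Qf h₀ ι x y (n, ι (incr x n)) =
      (x (max n (ι (incr x n)))).1 * h₀ * ((y (max n (ι (incr x n)))).1)⁻¹ := by
    rw [Qf]
    simp [e2]
  refine ⟨(y (max n (ι (incr x n)))).1, ?_⟩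
  rw [hval]
  group

lemma incr_eq_of_d (x y : ℕ → G × Λ) (ℓ : Λ) (N : ℕ)
    (hN : ∀ n, N ≤ n → (x n).2 * ((y n).2)⁻¹ = ℓ) :
    ∀ n, N ≤ n → incr x n = incr y n := by
  intro n hn
  have h1 : (x n).2 = ℓ * (y n).2 := by
    have := hN n hn
    rw [mul_inv_eq_iff_eq_mul] at this
    exact this
  have h2 : (x (n + 1)).2 = ℓ * (y (n + 1)).2 := by
    have := hN (n + 1) (le_trans hn (Nat.le_succ n))
    rw [mul_inv_eq_iff_eq_mul] at this
    exact this
  rw [incr, incr, h1, h2]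
  group

lemma d_const_of_incr (x y : ℕ → G × Λ) (N : ℕ)
    (hN : ∀ n, N ≤ n → incr x n = incr y n) :
    ∀ n, N ≤ n → (x n).2 * ((y n).2)⁻¹ = (x N).2 * ((y N).2)⁻¹ := by
  intro n hn
  induction n, hn using Nat.le_induction with
  | base => rfl
  | succ n hn ih =>
    have hx : (x (n + 1)).2 = (x n).2 * incr x n := by rw [incr]; group
    have hy : (y (n + 1)).2 = (y n).2 * incr y n := by rw [incr]; group
    rw [hx, hy, ← hN n hn, quot_cancel, ih]

end Aux

/-- Let `Λ` be a countable discrete group and `G` a Polish group containing an element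
`h₀` whose conjugacy class does not accumulate at the identity. Then `E(G × Λ)` is
Borel bireducible with `E(G)`. -/
theorem stmt5 {G Λ : Type*} [Group G] [TopologicalSpace G] [IsTopologicalGroup G] [PolishSpace G]
    [Group Λ] [TopologicalSpace Λ] [IsTopologicalGroup Λ] [Countable Λ] [DiscreteTopology Λ]
    (h₀ : G) (hh₀ : (1 : G) ∉ closure {x : G | ∃ g : G, x = g * h₀ * g⁻¹}) :
    BorelReducible (ERel (G × Λ)) (ERel G) ∧ BorelReducible (ERel G) (ERel (G × Λ)) := by
  obtain ⟨ι, hι⟩ := Countable.exists_injective_nat Λ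
  set e : ℕ ≃ ℕ × ℕ := (Denumerable.eqv (ℕ × ℕ)).symm with he
  constructor
  · -- E(G × Λ) ≤ E(G)
    refine ⟨theta h₀ ι e, myBorelMeasurable (theta_continuous h₀ ι e), fun x y => ?_⟩
    constructor
    · rintro ⟨⟨g, ℓ⟩, hgl⟩
      have hc : Tendsto (fun n => (x n).1 * ((y n).1)⁻¹) atTop (𝓝 g) :=
        (continuous_fst.tendsto _).comp hgl
      have hd : Tendsto (fun n => (x n).2 * ((y n).2)⁻¹) atTop (𝓝 ℓ) :=
        (continuous_snd.tendsto _).comp hgl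
      have h5 : ({ℓ} : Set Λ) ∈ 𝓝 ℓ := (isOpen_discrete _).mem_nhds rfl
      have hd1 : ∀ᶠ n in atTop, (x n).2 * ((y n).2)⁻¹ = ℓ :=
        hd.eventually (eventually_of_mem h5 fun z hz => hz)
      obtain ⟨N, hN⟩ := eventually_atTop.1 hd1
      have hQ := tendsto_Qf_cofinite h₀ ι x y g hc N (incr_eq_of_d x y ℓ N hN)
      have h7 := hQ.comp e.injective.tendsto_cofinite
      rw [Nat.cofinite_eq_atTop] at h7
      exact ⟨g, h7⟩
    · rintro ⟨g, hq'⟩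
      rw [← Nat.cofinite_eq_atTop] at hq'
      have hq : Tendsto (Qf h₀ ι x y) cofinite (𝓝 g) := by
        have h8 := hq'.comp e.symm.injective.tendsto_cofinite
        refine h8.congr fun p => ?_
        show Qf h₀ ι x y (e (e.symm p)) = Qf h₀ ι x y p
        rw [Equiv.apply_symm_apply]
      have hc := tendsto_c_of_Qf h₀ ι x y g hq
      obtain ⟨N, hN⟩ := eventually_atTop.1 (incr_ev_eq h₀ ι hι x y g hh₀ hq hc)
      have hdc := d_const_of_incr x y N hN
      have hdt : Tendsto (fun n => (x n).2 * ((y n).2)⁻¹) atTop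
          (𝓝 ((x N).2 * ((y N).2)⁻¹)) := by
        refine Tendsto.congr' ?_ tendsto_const_nhds
        filter_upwards [eventually_ge_atTop N] with n hn
        exact (hdc n hn).symm
      exact ⟨(g, (x N).2 * ((y N).2)⁻¹), hc.prodMk_nhds hdt⟩
  · -- E(G) ≤ E(G × Λ)
    refine ⟨fun x n => (x n, (1 : Λ)), myBorelMeasurable
      (continuous_pi fun n => ((continuous_apply n).prodMk continuous_const)), fun x y => ?_⟩
    constructor
    · rintro ⟨g, h⟩
      exact ⟨(g, (1 : Λ) * (1 : Λ)⁻¹), h.prodMk_nhds tendsto_const_nhds⟩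
    · rintro ⟨⟨g, ℓ⟩, h⟩
      exact ⟨g, (continuous_fst.tendsto _).comp h⟩
end

section
/- Let G be a TSI Polish group and let H be a closed normal subgroup of G that is non-archimedean (with the subspace topology). Then E(G) is Borel reducible to the product equivalence relation E(G/H) × E(G;0) on (G/H)^ω × G^ω, where G/H is the quotient topological group. -/
open Filter Topology

/-- `E(G;0)`: the relation on `G^ω` relating `x` and `y` iff `(x n)⁻¹ * y n → 1`. -/
def EZeroRel (G : Type*) [Group G] [TopologicalSpace G] (x y : ℕ → G) : Prop :=
  Tendsto (fun n => (x n)⁻¹ * y n) atTop (𝓝 (1 : G))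

/-- A topological group is non-archimedean if every neighborhood of the identity
contains an open subgroup. -/
def NonArchGroup (G : Type*) [Group G] [TopologicalSpace G] : Prop :=
  ∀ U ∈ 𝓝 (1 : G), ∃ V : Subgroup G, IsOpen (V : Set G) ∧ (V : Set G) ⊆ U

/-- A topological group is TSI if it admits a compatible two-sided invariant metric. -/
def TSIGroup (G : Type*) [Group G] [t : TopologicalSpace G] : Prop :=
  ∃ m : MetricSpace G, m.toUniformSpace.toTopologicalSpace = t ∧
    (∀ g h k : G, m.dist (g * h) (g * k) = m.dist h k) ∧
    (∀ g h k : G, m.dist (h * g) (k * g) = m.dist h k)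


theorem isGdelta_preimage {X Y : Type*} [TopologicalSpace X] [TopologicalSpace Y]
    {f : X → Y} (hf : Continuous f) {s : Set Y} (hs : IsGδ s) : IsGδ (f ⁻¹' s) := by
  obtain ⟨T, hTo, hTc, rfl⟩ := hs
  rw [Set.preimage_sInter]
  exact IsGδ.biInter hTc fun t ht => ((hTo t ht).preimage hf).isGδ

theorem isGdelta_range_of_dense {P C : Type*} [TopologicalSpace P] [PolishSpace P]
    [MetricSpace C] {f : P → C} (hf : Topology.IsEmbedding f)
    (hd : Dense (Set.range f)) : IsGδ (Set.range f) := by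
  letI := TopologicalSpace.upgradeIsCompletelyMetrizable P
  set W : ℕ → Set C := fun k => {x | ∃ O : Set C, IsOpen O ∧ x ∈ O ∧
      ∀ a b : P, f a ∈ O → f b ∈ O → dist a b ≤ (1 : ℝ) / (k + 1)} with hW
  have hWopen : ∀ k, IsOpen (W k) := by
    intro k
    rw [isOpen_iff_mem_nhds]
    rintro x ⟨O, hO, hxO, hsmall⟩
    exact Filter.mem_of_superset (hO.mem_nhds hxO) fun y hy => ⟨O, hO, hy, hsmall⟩
  have hSW : ∀ k, Set.range f ⊆ W k := by
    rintro k _ ⟨p, rfl⟩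
    have h1 : Metric.ball p ((1 : ℝ) / (2 * (k + 1))) ∈ comap f (𝓝 (f p)) := by
      rw [← hf.isInducing.nhds_eq_comap]
      exact Metric.ball_mem_nhds _ (by positivity)
    obtain ⟨U, hU, hUsub⟩ := Filter.mem_comap.mp h1
    obtain ⟨O, hOU, hO, hxO⟩ := mem_nhds_iff.mp hU
    refine ⟨O, hO, hxO, fun a b ha hb => ?_⟩
    have ha' : dist a p < (1 : ℝ) / (2 * (k + 1)) := by
      have := hUsub (Set.mem_preimage.mpr (hOU ha))
      rwa [Metric.mem_ball] at this
    have hb' : dist b p < (1 : ℝ) / (2 * (k + 1)) := by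
      have := hUsub (Set.mem_preimage.mpr (hOU hb))
      rwa [Metric.mem_ball] at this
    have h2 : ((k : ℝ) + 1) ≠ 0 := by positivity
    have hsum : (1 : ℝ) / (2 * (k + 1)) + 1 / (2 * (k + 1)) = 1 / ((k : ℝ) + 1) := by
      field_simp
      norm_num
    calc dist a b ≤ dist a p + dist p b := dist_triangle _ _ _
      _ ≤ (1 : ℝ) / (2 * (k + 1)) + 1 / (2 * (k + 1)) := by
          rw [dist_comm p b]; exact add_le_add ha'.le hb'.le
      _ = 1 / ((k : ℝ) + 1) := hsum
  have key : (⋂ k, W k) ⊆ Set.range f := by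
    intro x hx
    have hx' : ∀ k : ℕ, ∃ O : Set C, IsOpen O ∧ x ∈ O ∧
        ∀ a b : P, f a ∈ O → f b ∈ O → dist a b ≤ (1 : ℝ) / (k + 1) :=
      fun k => Set.mem_iInter.mp hx k
    choose O hOo hOx hOs using hx'
    have hsel : ∀ k : ℕ, ∃ a : P,
        f a ∈ Metric.ball x ((1 : ℝ) / (k + 1)) ∩ ⋂ j ∈ Finset.range (k + 1), O j := by
      intro k
      have hopen : IsOpen (Metric.ball x ((1 : ℝ) / (k + 1)) ∩ ⋂ j ∈ Finset.range (k + 1), O j) :=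
        Metric.isOpen_ball.inter (isOpen_biInter_finset fun j _ => hOo j)
      have hxmem : x ∈ Metric.ball x ((1 : ℝ) / (k + 1)) ∩ ⋂ j ∈ Finset.range (k + 1), O j :=
        ⟨Metric.mem_ball_self (by positivity), Set.mem_biInter fun j _ => hOx j⟩
      obtain ⟨y, hyS, hyU⟩ := hd.exists_mem_open hopen ⟨x, hxmem⟩
      obtain ⟨p, rfl⟩ := hyS
      exact ⟨p, hyU⟩
    choose σ hσ using hsel
    have hσball : ∀ k, dist (f (σ k)) x < (1 : ℝ) / (k + 1) := fun k => by
      have := (hσ k).1; rwa [Metric.mem_ball] at this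
    have hσO : ∀ j k, j ≤ k → f (σ k) ∈ O j := fun j k hjk => by
      have := (hσ k).2
      rw [Set.mem_iInter₂] at this
      exact this j (Finset.mem_range.mpr (Nat.lt_succ_of_le hjk))
    have hcau : CauchySeq σ := by
      rw [Metric.cauchySeq_iff]
      intro ε hε
      obtain ⟨k, hk⟩ := exists_nat_one_div_lt hε
      refine ⟨k, fun m hm n hn => ?_⟩
      calc dist (σ m) (σ n) ≤ (1 : ℝ) / (k + 1) :=
            hOs k (σ m) (σ n) (hσO k m hm) (hσO k n hn)
        _ < ε := hk
    obtain ⟨t, ht⟩ := cauchySeq_tendsto_of_complete hcau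
    have h1 : Tendsto (fun k => f (σ k)) atTop (𝓝 (f t)) :=
      (hf.continuous.tendsto t).comp ht
    have h2 : Tendsto (fun k => f (σ k)) atTop (𝓝 x) := by
      rw [tendsto_iff_dist_tendsto_zero]
      apply squeeze_zero (fun k => dist_nonneg) (fun k => (hσball k).le)
      exact tendsto_one_div_add_atTop_nhds_zero_nat
    exact ⟨t, (tendsto_nhds_unique h1 h2)⟩
  have hSeq : Set.range f = ⋂ k, W k := Set.Subset.antisymm (Set.subset_iInter hSW) key
  rw [hSeq]
  exact IsGδ.iInter_of_isOpen hWopen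

theorem mem_of_dense_isGdelta_addSubgroup {C : Type*} [AddGroup C] [TopologicalSpace C]
    [IsTopologicalAddGroup C] [BaireSpace C] (S : AddSubgroup C)
    (hd : Dense (S : Set C)) (hgd : IsGδ (S : Set C)) (x : C) : x ∈ S := by
  have hne : Nonempty C := ⟨0⟩
  set φ : C ≃ₜ C := (Homeomorph.neg C).trans (Homeomorph.addLeft x) with hφ
  have hT_dense : Dense (φ ⁻¹' (S : Set C)) := hd.preimage φ.isOpenMap
  have hT_gd : IsGδ (φ ⁻¹' (S : Set C)) := isGdelta_preimage φ.continuous hgd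
  obtain ⟨g, hgS, hgT⟩ := (Dense.inter_of_Gδ hgd hT_gd hd hT_dense).nonempty
  have hφg : x + -g ∈ (S : Set C) := by simpa [hφ] using hgT
  have := S.add_mem hφg hgS
  rwa [neg_add_cancel_right] at this

theorem exists_tendsto_of_cauchySeq_biinv {G : Type*} [Group G] [MetricSpace G] [PolishSpace G]
    (hl : ∀ g h k : G, dist (g * h) (g * k) = dist h k)
    (hr : ∀ g h k : G, dist (h * g) (k * g) = dist h k)
    (u : ℕ → G) (hu : CauchySeq u) : ∃ g : G, Tendsto u atTop (𝓝 g) := by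
  have hinv : ∀ b d : G, dist b⁻¹ d⁻¹ = dist b d := by
    intro b d
    calc dist b⁻¹ d⁻¹ = dist (d * b⁻¹) (d * d⁻¹) := (hl d _ _).symm
      _ = dist (d * b⁻¹) 1 := by rw [mul_inv_cancel]
      _ = dist (d * b⁻¹ * b) (1 * b) := (hr b _ _).symm
      _ = dist d b := by rw [inv_mul_cancel_right, one_mul]
      _ = dist b d := dist_comm _ _
  have hdiv : UniformContinuous (fun p : G × G => p.1 / p.2) := by
    rw [Metric.uniformContinuous_iff]
    intro ε hε
    refine ⟨ε / 2, by positivity, ?_⟩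
    rintro ⟨a, b⟩ ⟨c, d⟩ hab
    rw [Prod.dist_eq] at hab
    have h1 : dist a c < ε / 2 := lt_of_le_of_lt (le_max_left _ _) hab
    have h2 : dist b d < ε / 2 := lt_of_le_of_lt (le_max_right _ _) hab
    calc dist (a / b) (c / d) = dist (a * b⁻¹) (c * d⁻¹) := by
          rw [div_eq_mul_inv, div_eq_mul_inv]
      _ ≤ dist (a * b⁻¹) (c * b⁻¹) + dist (c * b⁻¹) (c * d⁻¹) := dist_triangle _ _ _
      _ = dist a c + dist b⁻¹ d⁻¹ := by rw [hr b⁻¹, hl c]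
      _ = dist a c + dist b d := by rw [hinv]
      _ < ε := by linarith
  letI : MetricSpace (Additive G) := ‹MetricSpace G›
  haveI : IsUniformAddGroup (Additive G) := ⟨hdiv⟩
  haveI : PolishSpace (Additive G) := ‹PolishSpace G›
  set A := Additive G
  set C := UniformSpace.Completion A with hC
  have hiso : Isometry ((↑) : A → C) := UniformSpace.Completion.coe_isometry
  have hemb : Topology.IsEmbedding ((↑) : A → C) := hiso.isEmbedding
  let ι : A →+ C := UniformSpace.Completion.toCompl
  let S : AddSubgroup C := ι.range
  have hcoeS : (S : Set C) = Set.range ((↑) : A → C) := rfl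
  have hdense : Dense (S : Set C) := by
    rw [hcoeS]; exact UniformSpace.Completion.denseRange_coe
  haveI hpolS : PolishSpace (Set.range ((↑) : A → C)) :=
    (Topology.IsEmbedding.toHomeomorph hemb).symm.isClosedEmbedding.polishSpace
  have hgd : IsGδ (S : Set C) := by
    rw [hcoeS]
    exact isGdelta_range_of_dense hemb (by rw [← hcoeS]; exact hdense)
  have hall : ∀ ξ : C, ξ ∈ S := fun ξ =>
    mem_of_dense_isGdelta_addSubgroup S hdense hgd ξ
  have hu0 : CauchySeq (fun n => Additive.ofMul (u n)) := hu
  have hu' : CauchySeq (fun n => ((Additive.ofMul (u n) : A) : C)) :=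
    (UniformSpace.Completion.uniformContinuous_coe A).comp_cauchySeq hu0
  obtain ⟨ξ, hξ⟩ := cauchySeq_tendsto_of_complete hu'
  obtain ⟨g, hg⟩ := AddMonoidHom.mem_range.mp (hall ξ)
  refine ⟨Additive.toMul g, ?_⟩
  have hfin : Tendsto (fun n => (Additive.ofMul (u n) : A)) atTop (𝓝 g) := by
    rw [hemb.tendsto_nhds_iff]
    rw [show (((g : A) : C)) = ξ from hg]
    exact hξ
  exact hfin

/-- Let `G` be a TSI Polish group and `H` a closed normal non-archimedean subgroup.
Then `E(G) ≤_B E(G/H) × E(G;0)`. -/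
theorem stmt15 {G : Type*} [Group G] [TopologicalSpace G] [IsTopologicalGroup G] [PolishSpace G]
    (htsi : TSIGroup G)
    (H : Subgroup G) [H.Normal] (hclosed : IsClosed (H : Set G))
    (hna : NonArchGroup ↥H) :
    BorelReducible (ERel G)
      (fun p q : (ℕ → G ⧸ H) × (ℕ → G) => ERel (G ⧸ H) p.1 q.1 ∧ EZeroRel G p.2 q.2) := by
  classical
  obtain ⟨m, hmt, hl0, hr0⟩ := htsi
  letI : MetricSpace G := m.replaceTopology hmt.symm
  have hl : ∀ g h k : G, dist (g * h) (g * k) = dist h k := hl0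
  have hr : ∀ g h k : G, dist (h * g) (k * g) = dist h k := hr0
  refine ⟨fun x => (fun n => (x n : G ⧸ H), fun n => (x n)⁻¹ * x (n + 1)), ?_, ?_⟩
  · apply Continuous.borel_measurable
    refine Continuous.prodMk ?_ ?_
    · exact continuous_pi fun n => QuotientGroup.continuous_mk.comp (continuous_apply n)
    · exact continuous_pi fun n => ((continuous_apply n).inv).mul (continuous_apply (n + 1))
  · intro x y
    have hzdist : ∀ n : ℕ,
        dist (x n * (y n)⁻¹) (x (n + 1) * (y (n + 1))⁻¹)
          = dist (((x n)⁻¹ * x (n + 1))⁻¹ * ((y n)⁻¹ * y (n + 1))) 1 := by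
      intro n
      calc dist (x n * (y n)⁻¹) (x (n + 1) * (y (n + 1))⁻¹)
          = dist (x n * (y n)⁻¹ * y (n + 1)) (x (n + 1) * (y (n + 1))⁻¹ * y (n + 1)) :=
            (hr (y (n + 1)) _ _).symm
        _ = dist (x n * ((y n)⁻¹ * y (n + 1))) (x (n + 1)) := by
            rw [inv_mul_cancel_right, mul_assoc]
        _ = dist ((x (n + 1))⁻¹ * (x n * ((y n)⁻¹ * y (n + 1)))) ((x (n + 1))⁻¹ * x (n + 1)) :=
            (hl (x (n + 1))⁻¹ _ _).symm
        _ = dist (((x n)⁻¹ * x (n + 1))⁻¹ * ((y n)⁻¹ * y (n + 1))) 1 := by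
            rw [inv_mul_cancel]
            congr 1
            group
    constructor
    · rintro ⟨g, hg⟩
      refine ⟨⟨(g : G ⧸ H), ?_⟩, ?_⟩
      · have h1 : Tendsto (fun n => ((x n * (y n)⁻¹ : G) : G ⧸ H)) atTop (𝓝 (g : G ⧸ H)) :=
          (QuotientGroup.continuous_mk.tendsto g).comp hg
        refine h1.congr fun n => ?_
        simp [QuotientGroup.mk_mul, QuotientGroup.mk_inv]
      · show Tendsto (fun n => ((x n)⁻¹ * x (n + 1))⁻¹ * ((y n)⁻¹ * y (n + 1))) atTop (𝓝 1)
        rw [tendsto_iff_dist_tendsto_zero]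
        have hg' : Tendsto (fun n => x (n + 1) * (y (n + 1))⁻¹) atTop (𝓝 g) :=
          hg.comp (tendsto_add_atTop_nat 1)
        have h1 : Tendsto
            (fun n => dist (x n * (y n)⁻¹) (x (n + 1) * (y (n + 1))⁻¹)) atTop (𝓝 0) := by
          simpa using hg.dist hg'
        exact h1.congr fun n => hzdist n
    · rintro ⟨⟨c, hc⟩, hz⟩
      obtain ⟨g, rfl⟩ := QuotientGroup.mk_surjective c
      set a : ℕ → G := fun n => x n * (y n)⁻¹ with ha
      have hca : Tendsto (fun n => ((a n : G ⧸ H) * (g : G ⧸ H)⁻¹)) atTop (𝓝 1) := by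
        have h1 : Tendsto (fun n => ((a n : G) : G ⧸ H)) atTop (𝓝 (g : G ⧸ H)) := by
          refine hc.congr fun n => ?_
          simp [ha, QuotientGroup.mk_mul, QuotientGroup.mk_inv]
        simpa using h1.mul (tendsto_const_nhds (x := ((g : G ⧸ H))⁻¹))
      set P : ℕ → Set G := fun n => {w : G | (w : G ⧸ H) = (a n : G ⧸ H) * (g : G ⧸ H)⁻¹}
        with hP
      have hPne : ∀ n, (P n).Nonempty := fun n =>
        ⟨a n * g⁻¹, by simp [hP, QuotientGroup.mk_mul, QuotientGroup.mk_inv]⟩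
      set D : ℕ → ℝ := fun n => Metric.infDist (1 : G) (P n) with hD
      have hchoice : ∀ n : ℕ, ∃ w ∈ P n, dist (1 : G) w < D n + 1 / (n + 1) := fun n =>
        (Metric.infDist_lt_iff (hPne n)).mp (lt_add_of_pos_right _ (by positivity))
      choose w hwP hwd using hchoice
      have hD0 : Tendsto D atTop (𝓝 0) := by
        rw [Metric.tendsto_atTop]
        intro ε hε
        have hU : (QuotientGroup.mk '' Metric.ball (1 : G) (ε / 2) : Set (G ⧸ H))
            ∈ 𝓝 (1 : G ⧸ H) := by
          have hopen := QuotientGroup.isOpenMap_coe (N := H) (Metric.ball (1 : G) (ε / 2)) Metric.isOpen_ball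
          refine hopen.mem_nhds ⟨1, Metric.mem_ball_self (by positivity), ?_⟩
          simp
        obtain ⟨N, hN⟩ := Filter.eventually_atTop.mp (hca.eventually_mem hU)
        refine ⟨N, fun n hn => ?_⟩
        obtain ⟨v, hv, hveq⟩ := hN n hn
        have hvP : v ∈ P n := hveq
        have hvlt : dist (1 : G) v < ε / 2 := by
          rw [dist_comm]; rwa [Metric.mem_ball] at hv
        have hDle : D n ≤ dist (1 : G) v := Metric.infDist_le_dist_of_mem hvP
        have hDnn : 0 ≤ D n := Metric.infDist_nonneg
        rw [Real.dist_eq, sub_zero, abs_of_nonneg hDnn]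
        linarith
      have hw1 : Tendsto w atTop (𝓝 (1 : G)) := by
        rw [tendsto_iff_dist_tendsto_zero]
        have hle : ∀ n : ℕ, dist (w n) 1 ≤ D n + 1 / (n + 1) := fun n => by
          rw [dist_comm]; exact (hwd n).le
        have hlim : Tendsto (fun n : ℕ => D n + 1 / (n + 1)) atTop (𝓝 0) := by
          simpa using hD0.add tendsto_one_div_add_atTop_nhds_zero_nat
        exact squeeze_zero (fun n => dist_nonneg) hle hlim
      set b : ℕ → G := fun n => w n * g with hb
      have hbg : Tendsto b atTop (𝓝 g) := by
        simpa using hw1.mul (tendsto_const_nhds (x := g))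
      have hbq : ∀ n, ((b n : G) : G ⧸ H) = (a n : G ⧸ H) := by
        intro n
        have hwn : ((w n : G) : G ⧸ H) = (a n : G ⧸ H) * (g : G ⧸ H)⁻¹ := hwP n
        rw [hb]
        show ((w n * g : G) : G ⧸ H) = (a n : G ⧸ H)
        rw [QuotientGroup.mk_mul, hwn, inv_mul_cancel_right]
      set h : ℕ → G := fun n => (b n)⁻¹ * a n with hh
      have hmem : ∀ n, h n ∈ H := by
        intro n
        rw [← QuotientGroup.eq_one_iff]
        show (((b n)⁻¹ * a n : G) : G ⧸ H) = 1
        rw [QuotientGroup.mk_mul, QuotientGroup.mk_inv, hbq n, inv_mul_cancel]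
      have hz' : Tendsto (fun n => dist (a n) (a (n + 1))) atTop (𝓝 0) := by
        have hz0 : Tendsto
            (fun n => dist (((x n)⁻¹ * x (n + 1))⁻¹ * ((y n)⁻¹ * y (n + 1))) 1) atTop (𝓝 0) :=
          tendsto_iff_dist_tendsto_zero.mp hz
        exact hz0.congr fun n => (hzdist n).symm
      have hbinv : Tendsto (fun n => dist ((b n)⁻¹) ((b (n + 1))⁻¹)) atTop (𝓝 0) := by
        have h1 : Tendsto (fun n => (b n)⁻¹) atTop (𝓝 g⁻¹) := hbg.inv
        have h2 : Tendsto (fun n => (b (n + 1))⁻¹) atTop (𝓝 g⁻¹) :=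
          h1.comp (tendsto_add_atTop_nat 1)
        simpa using h1.dist h2
      have hhd : Tendsto (fun n => dist (h n) (h (n + 1))) atTop (𝓝 0) := by
        have hle : ∀ n, dist (h n) (h (n + 1))
            ≤ dist (a n) (a (n + 1)) + dist ((b n)⁻¹) ((b (n + 1))⁻¹) := by
          intro n
          calc dist (h n) (h (n + 1))
              ≤ dist ((b n)⁻¹ * a n) ((b n)⁻¹ * a (n + 1))
                + dist ((b n)⁻¹ * a (n + 1)) ((b (n + 1))⁻¹ * a (n + 1)) := dist_triangle _ _ _
            _ = dist (a n) (a (n + 1)) + dist ((b n)⁻¹) ((b (n + 1))⁻¹) := by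
                rw [hl, hr]
        exact squeeze_zero (fun n => dist_nonneg) hle (by simpa using hz'.add hbinv)
      have hHcau : CauchySeq h := by
        rw [Metric.cauchySeq_iff]
        intro ε hε
        have hUH : (Subtype.val ⁻¹' Metric.ball (1 : G) ε : Set ↥H) ∈ 𝓝 (1 : ↥H) := by
          apply continuous_subtype_val.continuousAt.preimage_mem_nhds
          simpa using Metric.ball_mem_nhds (1 : G) hε
        obtain ⟨V, hVopen, hVsub⟩ := hna _ hUH
        have hencons : Tendsto
            (fun n => (⟨(h n)⁻¹ * h (n + 1),
              H.mul_mem (H.inv_mem (hmem n)) (hmem (n + 1))⟩ : ↥H)) atTop (𝓝 (1 : ↥H)) := by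
          rw [Topology.IsEmbedding.subtypeVal.tendsto_nhds_iff]
          show Tendsto (fun n => (h n)⁻¹ * h (n + 1)) atTop (𝓝 ((1 : ↥H) : G))
          rw [tendsto_iff_dist_tendsto_zero]
          refine hhd.congr fun n => ?_
          calc dist (h n) (h (n + 1)) = dist (h (n + 1)) (h n) := dist_comm _ _
            _ = dist (h n * ((h n)⁻¹ * h (n + 1))) (h n * 1) := by
                rw [mul_one, mul_inv_cancel_left]
            _ = dist ((h n)⁻¹ * h (n + 1)) ((1 : ↥H) : G) := hl _ _ _
        obtain ⟨N, hN⟩ := Filter.eventually_atTop.mp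
          (hencons.eventually_mem (hVopen.mem_nhds V.one_mem))
        have key : ∀ p, N ≤ p → ∀ d : ℕ,
            (⟨(h p)⁻¹ * h (p + d),
              H.mul_mem (H.inv_mem (hmem p)) (hmem (p + d))⟩ : ↥H) ∈ V := by
          intro p hp d
          induction d with
          | zero =>
            have he : (⟨(h p)⁻¹ * h (p + 0),
                H.mul_mem (H.inv_mem (hmem p)) (hmem (p + 0))⟩ : ↥H) = 1 := by
              ext; simp
            rw [he]; exact V.one_mem
          | succ d ih =>
            have h2 := hN (p + d) (le_trans hp (Nat.le_add_right _ _))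
            have hprod := V.mul_mem ih h2
            have he : (⟨(h p)⁻¹ * h (p + (d + 1)),
                H.mul_mem (H.inv_mem (hmem p)) (hmem (p + (d + 1)))⟩ : ↥H)
              = (⟨(h p)⁻¹ * h (p + d), H.mul_mem (H.inv_mem (hmem p)) (hmem (p + d))⟩ : ↥H)
                * (⟨(h (p + d))⁻¹ * h (p + d + 1),
                    H.mul_mem (H.inv_mem (hmem (p + d))) (hmem (p + d + 1))⟩ : ↥H) := by
              ext
              show (h p)⁻¹ * h (p + (d + 1)) = ((h p)⁻¹ * h (p + d)) * ((h (p + d))⁻¹ * h (p + d + 1))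
              rw [show p + (d + 1) = p + d + 1 from rfl]
              group
            rw [he]; exact hprod
        have main : ∀ p q, N ≤ p → p ≤ q → dist (h p) (h q) < ε := by
          intro p q hp hpq
          obtain ⟨d, rfl⟩ := Nat.exists_eq_add_of_le hpq
          have hball := hVsub (key p hp d)
          simp only [Set.mem_preimage, Metric.mem_ball] at hball
          calc dist (h p) (h (p + d)) = dist (h (p + d)) (h p) := dist_comm _ _
            _ = dist (h p * ((h p)⁻¹ * h (p + d))) (h p * 1) := by
                rw [mul_one, mul_inv_cancel_left]
            _ = dist ((h p)⁻¹ * h (p + d)) 1 := hl _ _ _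
            _ < ε := hball
        refine ⟨N, fun p hp q hq => ?_⟩
        rcases le_total p q with hle | hle
        · exact main p q hp hle
        · rw [dist_comm]; exact main q p hq hle
      obtain ⟨hstar, hhlim⟩ := exists_tendsto_of_cauchySeq_biinv hl hr h hHcau
      refine ⟨g * hstar, ?_⟩
      have hfin : Tendsto (fun n => b n * h n) atTop (𝓝 (g * hstar)) := hbg.mul hhlim
      refine hfin.congr fun n => ?_
      show b n * ((b n)⁻¹ * a n) = x n * (y n)⁻¹
      rw [mul_inv_cancel_left]
end
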